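/- Let λ > 0 and σ > 0 with σ²/λ ≥ 1, let T ≥ 1, and let φ_1, …, φ_T ∈ ℝ^m with ‖φ_t‖₂ ≤ 1 for all t. Define Σ_0 = (1/λ) I_m and Σ_t = (1/λ) I_m + (1/σ²) Σ_{τ=1}^t φ_τ φ_τᵀ for t ≥ 1. Then Σ_{t=1}^T φ_tᵀ Σ_{t−1}⁻¹ φ_t ≤ 2 m σ² log(1 + Tλ/(m σ²)). -/

import Mathlib

open Matrix Finset Real


section EllipticalAux

variable {m : ℕ}

lemma ea_posSemidef_vecMulVec (v : Fin m → ℝ) : (vecMulVec v v).PosSemidef := by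
  refine posSemidef_iff_dotProduct_mulVec.mpr ⟨?_, ?_⟩
  · ext i j
    simp [vecMulVec_apply, conjTranspose_apply, mul_comm]
  · intro x
    have h : vecMulVec v v *ᵥ x = (v ⬝ᵥ x) • v := by
      ext i
      simp [vecMulVec_apply, mulVec, dotProduct, Finset.mul_sum, mul_assoc, mul_comm, mul_left_comm]
    rw [star_trivial, h, dotProduct_smul]
    have : x ⬝ᵥ v = v ⬝ᵥ x := dotProduct_comm x v
    simp only [smul_eq_mul, this]
    exact mul_self_nonneg _

lemma ea_posSemidef_smul {M : Matrix (Fin m) (Fin m) ℝ} (hM : M.PosSemidef) {c : ℝ}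
    (hc : 0 ≤ c) : (c • M).PosSemidef := by
  refine posSemidef_iff_dotProduct_mulVec.mpr ⟨?_, ?_⟩
  · show (c • M)ᴴ = c • M
    rw [conjTranspose_smul, hM.1]; simp
  · intro x
    rw [smul_mulVec, dotProduct_smul, smul_eq_mul]
    exact mul_nonneg hc (hM.dotProduct_mulVec_nonneg x)

lemma ea_posSemidef_sum {s : Finset ℕ} {f : ℕ → Matrix (Fin m) (Fin m) ℝ}
    (hf : ∀ i ∈ s, (f i).PosSemidef) : (∑ i ∈ s, f i).PosSemidef := by
  classical
  induction s using Finset.induction with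
  | empty => simpa using Matrix.PosSemidef.zero
  | insert _ _ h ih =>
    rw [Finset.sum_insert h]
    exact Matrix.PosSemidef.add (hf _ (Finset.mem_insert_self _ _))
      (ih fun i hi => hf i (Finset.mem_insert_of_mem hi))

lemma ea_posDef_smul_one {c : ℝ} (hc : 0 < c) :
    (c • (1 : Matrix (Fin m) (Fin m) ℝ)).PosDef := by
  refine posDef_iff_dotProduct_mulVec.mpr ⟨?_, ?_⟩
  · show (c • (1 : Matrix (Fin m) (Fin m) ℝ))ᴴ = c • 1
    rw [conjTranspose_smul, conjTranspose_one]; simp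
  · intro x hx
    rw [star_trivial, smul_mulVec, one_mulVec, dotProduct_smul, smul_eq_mul]
    have hxx : 0 < x ⬝ᵥ x := by
      have h1 : 0 ≤ x ⬝ᵥ x := Finset.sum_nonneg fun i _ => mul_self_nonneg _
      rcases h1.lt_or_eq with h | h
      · exact h
      · exfalso; apply hx; ext i
        have := Finset.sum_eq_zero_iff_of_nonneg (fun j (_ : j ∈ Finset.univ) =>
          mul_self_nonneg (x j)) |>.mp h.symm i (Finset.mem_univ i)
        simpa [mul_self_eq_zero] using this
    exact mul_pos hc hxx

/-- quadratic form of inverse bound -/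
lemma ea_inv_quad_bound {M : Matrix (Fin m) (Fin m) ℝ} (hM : M.PosDef) {c : ℝ} (hc : 0 < c)
    (hMc : (M - c • 1).PosSemidef) (x : Fin m → ℝ) :
    x ⬝ᵥ M⁻¹ *ᵥ x ≤ (1 / c) * (x ⬝ᵥ x) := by
  set y := M⁻¹ *ᵥ x with hy
  have hMy : M *ᵥ y = x := by
    rw [hy, mulVec_mulVec, Matrix.mul_nonsing_inv _ (isUnit_iff_ne_zero.mpr hM.det_pos.ne'),
      one_mulVec]
  have hq : x ⬝ᵥ y = y ⬝ᵥ (M *ᵥ y) := by rw [hMy, dotProduct_comm]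
  have hq0 : 0 ≤ x ⬝ᵥ y := by
    have := hM.inv.posSemidef.dotProduct_mulVec_nonneg x
    rwa [star_trivial] at this
  have hyy : c * (y ⬝ᵥ y) ≤ x ⬝ᵥ y := by
    have h0 := hMc.dotProduct_mulVec_nonneg y
    rw [star_trivial, sub_mulVec, dotProduct_sub, smul_mulVec, one_mulVec,
      dotProduct_smul, smul_eq_mul] at h0
    linarith [hq ▸ h0, hq]
  have hCS : (x ⬝ᵥ y) ^ 2 ≤ (x ⬝ᵥ x) * (y ⬝ᵥ y) := by
    have := Finset.sum_mul_sq_le_sq_mul_sq Finset.univ x y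
    simpa [dotProduct, pow_two, mul_assoc] using this
  have hxx : 0 ≤ x ⬝ᵥ x := Finset.sum_nonneg fun i _ => mul_self_nonneg _
  rcases hq0.lt_or_eq with hpos | hzero
  · have hyy' : y ⬝ᵥ y ≤ (x ⬝ᵥ y) / c := by
      rw [le_div_iff₀ hc]; linarith [hyy]
    have : (x ⬝ᵥ y) ^ 2 ≤ (x ⬝ᵥ x) * ((x ⬝ᵥ y) / c) := le_trans hCS (by
      apply mul_le_mul_of_nonneg_left hyy' hxx)
    have h2 : c * (x ⬝ᵥ y) ^ 2 ≤ (x ⬝ᵥ x) * (x ⬝ᵥ y) := by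
      calc c * (x ⬝ᵥ y) ^ 2 ≤ c * ((x ⬝ᵥ x) * ((x ⬝ᵥ y) / c)) :=
            mul_le_mul_of_nonneg_left this hc.le
        _ = (x ⬝ᵥ x) * (x ⬝ᵥ y) := by field_simp
    have h3 : (x ⬝ᵥ y) * c ≤ x ⬝ᵥ x := by nlinarith [h2, hpos]
    rw [one_div, inv_mul_eq_div, le_div_iff₀ hc]
    exact h3
  · rw [← hzero]; positivity

end EllipticalAux


variable {m : ℕ}

lemma ea_det_rank_one {M : Matrix (Fin m) (Fin m) ℝ} (hM : IsUnit M.det) (c : ℝ)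
    (v : Fin m → ℝ) :
    (M + c • vecMulVec v v).det = M.det * (1 + c * (v ⬝ᵥ M⁻¹ *ᵥ v)) := by
  have h1 : c • vecMulVec v v = replicateCol Unit (c • v) * replicateRow Unit v := by
    ext i j
    simp [vecMulVec_apply, Matrix.mul_apply, Matrix.replicateCol_apply, Matrix.replicateRow_apply, mul_assoc]
  rw [h1, det_add_replicateCol_mul_replicateRow hM]
  congr 1
  have h2 : replicateRow Unit v * M⁻¹ * replicateCol Unit (c • v) = replicateRow Unit (v ᵥ* M⁻¹) * replicateCol Unit (c • v) := by
    rw [Matrix.replicateRow_vecMul]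
  rw [det_unique, h2]
  show (1 : Matrix Unit Unit ℝ) default default + _ = _
  rw [Matrix.one_apply_eq, Matrix.replicateRow_mul_replicateCol_apply]
  have : (v ᵥ* M⁻¹) ⬝ᵥ (c • v) = c * (v ⬝ᵥ M⁻¹ *ᵥ v) := by
    rw [dotProduct_smul, ← Matrix.dotProduct_mulVec]; simp
  rw [this]

lemma ea_trace_eq_sum_eigenvalues {A : Matrix (Fin m) (Fin m) ℝ} (hA : A.IsHermitian) :
    A.trace = ∑ i, hA.eigenvalues i := by
  simpa using hA.trace_eq_sum_eigenvalues

lemma ea_prod_le_pow (hm : 1 ≤ m) {f : Fin m → ℝ} (hf : ∀ i, 0 ≤ f i) :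
    ∏ i, f i ≤ ((∑ i, f i) / m) ^ m := by
  have hm0 : (0:ℝ) < m := by exact_mod_cast hm
  have hw : ∑ _i : Fin m, (1/(m:ℝ)) = 1 := by
    simp [Finset.sum_const]
    field_simp
  have hgm := Real.geom_mean_le_arith_mean_weighted Finset.univ (fun _ => 1/(m:ℝ)) f
    (fun _ _ => by positivity) hw (fun i _ => hf i)
  have key : ∀ i : Fin m, f i = (f i ^ ((1:ℝ)/m)) ^ (m:ℕ) := by
    intro i
    rw [← Real.rpow_natCast (f i ^ ((1:ℝ)/m)) m, ← Real.rpow_mul (hf i)]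
    rw [one_div, inv_mul_cancel₀ hm0.ne', Real.rpow_one]
  calc ∏ i, f i = (∏ i, f i ^ ((1:ℝ)/m)) ^ (m:ℕ) := by
        rw [← Finset.prod_pow]
        exact Finset.prod_congr rfl fun i _ => key i
    _ ≤ ((∑ i, f i) / m) ^ (m:ℕ) := by
        apply pow_le_pow_left₀ (Finset.prod_nonneg fun i _ => Real.rpow_nonneg (hf i) _)
        calc ∏ i, f i ^ ((1:ℝ)/m) ≤ ∑ i, (1/(m:ℝ)) * f i := hgm
          _ = (∑ i, f i) / m := by
              rw [Finset.sum_div]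
              exact Finset.sum_congr rfl fun i _ => by ring
    
lemma ea_half_le_log {x : ℝ} (hx0 : 0 ≤ x) (hx1 : x ≤ 1) : x ≤ 2 * Real.log (1 + x) := by
  have h1 : (0:ℝ) < 1 + x := by linarith
  have h2 := Real.log_le_sub_one_of_pos (inv_pos.mpr h1)
  rw [Real.log_inv] at h2
  have h3 : 1 - (1+x)⁻¹ ≤ Real.log (1+x) := by linarith
  have h4 : (1+x) * (1+x)⁻¹ = 1 := mul_inv_cancel₀ h1.ne'
  nlinarith [h3, h4]


section EllipticalMain

/-- Elliptical potential lemma: if `σ²/λ ≥ 1` and `‖φ_t‖₂ ≤ 1`, then with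
`Σ_t = (1/λ)I + (1/σ²)∑_{τ<t} φ_τ φ_τᵀ`, one has
`∑_{t<T} φ_tᵀ Σ_t⁻¹ φ_t ≤ 2 m σ² log(1 + Tλ/(mσ²))`. -/
theorem elliptical_potential (m T : ℕ) (hm : 1 ≤ m) (hT : 1 ≤ T)
    (lam σ : ℝ) (hlam : 0 < lam) (hσ : 0 < σ) (hratio : 1 ≤ σ ^ 2 / lam)
    (φ : ℕ → Fin m → ℝ) (hφ : ∀ t, Real.sqrt (φ t ⬝ᵥ φ t) ≤ 1) :
    ∑ t ∈ Finset.range T,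
        φ t ⬝ᵥ (((1 / lam) • (1 : Matrix (Fin m) (Fin m) ℝ)
            + (1 / σ ^ 2) • ∑ τ ∈ Finset.range t, Matrix.vecMulVec (φ τ) (φ τ))⁻¹ *ᵥ φ t)
      ≤ 2 * m * σ ^ 2 * Real.log (1 + T * lam / (m * σ ^ 2)) := by
  have hσ2 : (0:ℝ) < σ ^ 2 := by positivity
  have hm0 : (0:ℝ) < m := by exact_mod_cast hm
  have hT0 : (0:ℝ) < T := by exact_mod_cast hT
  have hlamσ : lam ≤ σ ^ 2 := by
    have := (le_div_iff₀ hlam).mp hratio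
    linarith
  set V : ℕ → Matrix (Fin m) (Fin m) ℝ := fun t =>
    (1 / lam) • (1 : Matrix (Fin m) (Fin m) ℝ)
      + (1 / σ ^ 2) • ∑ τ ∈ Finset.range t, Matrix.vecMulVec (φ τ) (φ τ) with hVdef
  set q : ℕ → ℝ := fun t => φ t ⬝ᵥ (V t)⁻¹ *ᵥ φ t with hqdef
  show ∑ t ∈ Finset.range T, q t ≤ _
  -- basic positivity facts
  have hAps : ∀ t, (∑ τ ∈ Finset.range t, Matrix.vecMulVec (φ τ) (φ τ)).PosSemidef :=
    fun t => ea_posSemidef_sum (fun i _ => ea_posSemidef_vecMulVec _)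
  have hVpd : ∀ t, (V t).PosDef := fun t =>
    (ea_posDef_smul_one (by positivity)).add_posSemidef
      (ea_posSemidef_smul (hAps t) (by positivity))
  have hVsub : ∀ t, (V t - (1 / lam) • 1).PosSemidef := by
    intro t
    have : V t - (1 / lam) • 1
        = (1 / σ ^ 2) • ∑ τ ∈ Finset.range t, Matrix.vecMulVec (φ τ) (φ τ) := by
      rw [hVdef]; simp [add_sub_cancel_left]
    rw [this]
    exact ea_posSemidef_smul (hAps t) (by positivity)
  have hVdetU : ∀ t, IsUnit (V t).det := fun t =>
    isUnit_iff_ne_zero.mpr (hVpd t).det_pos.ne'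
  have hφ2 : ∀ t, φ t ⬝ᵥ φ t ≤ 1 := by
    intro t
    have hd : 0 ≤ φ t ⬝ᵥ φ t := Finset.sum_nonneg fun i _ => mul_self_nonneg _
    nlinarith [Real.sq_sqrt hd, hφ t, Real.sqrt_nonneg (φ t ⬝ᵥ φ t)]
  have hq0 : ∀ t, 0 ≤ q t := by
    intro t
    have := (hVpd t).inv.posSemidef.dotProduct_mulVec_nonneg (φ t)
    rwa [star_trivial] at this
  have hqle : ∀ t, q t ≤ lam := by
    intro t
    have h1 := ea_inv_quad_bound (hVpd t) (by positivity : (0:ℝ) < 1 / lam) (hVsub t) (φ t)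
    have h2 : (1 : ℝ) / (1 / lam) = lam := by field_simp
    rw [h2] at h1
    calc q t ≤ lam * (φ t ⬝ᵥ φ t) := h1
      _ ≤ lam * 1 := by
          apply mul_le_mul_of_nonneg_left (hφ2 t) hlam.le
      _ = lam := mul_one lam
  -- determinant recursion and product formula
  have hdet_succ : ∀ t, (V (t + 1)).det = (V t).det * (1 + (1 / σ ^ 2) * q t) := by
    intro t
    have hstep : V (t + 1) = V t + (1 / σ ^ 2) • Matrix.vecMulVec (φ t) (φ t) := by
      rw [hVdef]
      simp only [Finset.sum_range_succ, smul_add]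
      rw [add_assoc]
    rw [hstep, ea_det_rank_one (hVdetU t)]
  have hdet_prod : ∀ n, (V n).det = (V 0).det * ∏ t ∈ Finset.range n, (1 + (1 / σ ^ 2) * q t) := by
    intro n
    induction n with
    | zero => simp
    | succ k ih => rw [Finset.prod_range_succ, hdet_succ k, ih]; ring
  have hdet0 : (V 0).det = (1 / lam) ^ m := by
    rw [hVdef]
    simp only [Finset.range_zero, Finset.sum_empty, smul_zero, add_zero]
    rw [Matrix.det_smul, Matrix.det_one, Fintype.card_fin, mul_one]
  have hfacpos : ∀ t, (0:ℝ) < 1 + (1 / σ ^ 2) * q t := by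
    intro t
    have := hq0 t
    have h1 : 0 ≤ (1 / σ ^ 2) * q t := by positivity
    linarith
  have hdet0pos : (0:ℝ) < (V 0).det := (hVpd 0).det_pos
  have hlogsum : ∑ t ∈ Finset.range T, Real.log (1 + (1 / σ ^ 2) * q t)
      = Real.log ((V T).det) - Real.log ((V 0).det) := by
    rw [hdet_prod T, Real.log_mul hdet0pos.ne'
      (Finset.prod_pos (fun t _ => hfacpos t)).ne']
    rw [Real.log_prod (fun t _ => (hfacpos t).ne')]
    ring
  -- trace bound
  have htrv : ∀ v : Fin m → ℝ, (Matrix.vecMulVec v v).trace = v ⬝ᵥ v := by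
    intro v
    simp [Matrix.trace, Matrix.diag, Matrix.vecMulVec_apply, dotProduct]
  have htr : (V T).trace ≤ (m:ℝ) * (1 / lam) + T / σ ^ 2 := by
    rw [hVdef]
    simp only [Matrix.trace_add, Matrix.trace_smul, Matrix.trace_one, Matrix.trace_sum,
      Fintype.card_fin, smul_eq_mul]
    have hsum : ∑ t ∈ Finset.range T, (Matrix.vecMulVec (φ t) (φ t)).trace ≤ (T:ℝ) := by
      calc ∑ t ∈ Finset.range T, (Matrix.vecMulVec (φ t) (φ t)).trace
          ≤ ∑ t ∈ Finset.range T, (1:ℝ) := by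
            apply Finset.sum_le_sum
            intro t _
            rw [htrv]
            exact hφ2 t
        _ = (T:ℝ) := by simp
    have h2 : (1 / σ ^ 2) * ∑ t ∈ Finset.range T, (Matrix.vecMulVec (φ t) (φ t)).trace
        ≤ (1 / σ ^ 2) * (T:ℝ) := by
      apply mul_le_mul_of_nonneg_left hsum (by positivity)
    calc (1 / lam) * (m:ℝ) + (1 / σ ^ 2) * ∑ t ∈ Finset.range T, (Matrix.vecMulVec (φ t) (φ t)).trace
        ≤ (1 / lam) * (m:ℝ) + (1 / σ ^ 2) * (T:ℝ) := by linarith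
      _ = (m:ℝ) * (1 / lam) + T / σ ^ 2 := by ring
  -- determinant bound via eigenvalues
  have htrpos : 0 < (V T).trace := by
    have := ea_trace_eq_sum_eigenvalues (hVpd T).1
    rw [this]
    exact Finset.sum_pos (fun i _ => (hVpd T).eigenvalues_pos i) (by
      simpa using Finset.univ_nonempty_iff.mpr (by
        exact Fin.pos_iff_nonempty.mp (by omega)))
  have hdetle : (V T).det ≤ ((V T).trace / m) ^ m := by
    have hH := (hVpd T).1
    have h1 : (V T).det = ∏ i, hH.eigenvalues i := by
      have := hH.det_eq_prod_eigenvalues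
      exact_mod_cast this
    rw [h1, ea_trace_eq_sum_eigenvalues hH]
    exact ea_prod_le_pow hm (fun i => ((hVpd T).eigenvalues_pos i).le)
  have hb : (V T).trace / m ≤ 1 / lam + T / (m * σ ^ 2) := by
    rw [div_le_iff₀ hm0]
    calc (V T).trace ≤ (m:ℝ) * (1 / lam) + T / σ ^ 2 := htr
      _ = (1 / lam + (T:ℝ) / (m * σ ^ 2)) * m := by field_simp
  have hbpos : (0:ℝ) < 1 / lam + T / (m * σ ^ 2) := by positivity
  have hlogVT : Real.log ((V T).det) ≤ (m:ℝ) * Real.log (1 / lam + T / (m * σ ^ 2)) := by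
    calc Real.log ((V T).det) ≤ Real.log (((V T).trace / m) ^ m) :=
          Real.log_le_log (hVpd T).det_pos hdetle
      _ ≤ Real.log ((1 / lam + T / (m * σ ^ 2)) ^ m) := by
          apply Real.log_le_log (by positivity)
          exact pow_le_pow_left₀ (by positivity) hb m
      _ = (m:ℝ) * Real.log (1 / lam + T / (m * σ ^ 2)) := by
          rw [Real.log_pow]
  have hlogdiff : Real.log ((V T).det) - Real.log ((V 0).det)
      ≤ (m:ℝ) * Real.log (1 + T * lam / (m * σ ^ 2)) := by
    rw [hdet0, Real.log_pow]
    have hkey : Real.log (1 / lam + T / (m * σ ^ 2)) - Real.log (1 / lam)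
        = Real.log (1 + T * lam / (m * σ ^ 2)) := by
      rw [← Real.log_div hbpos.ne' (by positivity : (1:ℝ)/lam ≠ 0)]
      congr 1
      field_simp
    push_cast
    nlinarith [hlogVT, hkey]
  -- per-term bound
  have hterm : ∀ t, q t ≤ 2 * σ ^ 2 * Real.log (1 + (1 / σ ^ 2) * q t) := by
    intro t
    have hx0 : 0 ≤ (1 / σ ^ 2) * q t := mul_nonneg (by positivity) (hq0 t)
    have hx1 : (1 / σ ^ 2) * q t ≤ 1 := by
      rw [div_mul_eq_mul_div, div_le_one hσ2, one_mul]
      exact le_trans (hqle t) hlamσ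
    have := ea_half_le_log hx0 hx1
    calc q t = σ ^ 2 * ((1 / σ ^ 2) * q t) := by field_simp
      _ ≤ σ ^ 2 * (2 * Real.log (1 + (1 / σ ^ 2) * q t)) := by
          apply mul_le_mul_of_nonneg_left this hσ2.le
      _ = 2 * σ ^ 2 * Real.log (1 + (1 / σ ^ 2) * q t) := by ring
  calc ∑ t ∈ Finset.range T, q t
      ≤ ∑ t ∈ Finset.range T, 2 * σ ^ 2 * Real.log (1 + (1 / σ ^ 2) * q t) :=
        Finset.sum_le_sum fun t _ => hterm t
    _ = 2 * σ ^ 2 * (Real.log ((V T).det) - Real.log ((V 0).det)) := by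
        rw [← hlogsum, Finset.mul_sum]
    _ ≤ 2 * σ ^ 2 * ((m:ℝ) * Real.log (1 + T * lam / (m * σ ^ 2))) := by
        apply mul_le_mul_of_nonneg_left hlogdiff (by positivity)
    _ = 2 * m * σ ^ 2 * Real.log (1 + T * lam / (m * σ ^ 2)) := by ring

end EllipticalMain
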